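/- Conversely, for nonzero linear constraints: if every point of Q^n satisfying a_1·x ≤ b_1 also satisfies a_2·x ≤ b_2, and a_1 ≠ 0, then there exists k > 0 such that k·a_1 = a_2 and k·b_1 ≤ b_2, or a_2 = 0 and b_2 ≥ 0. -/

import Mathlib

open Matrix

theorem constraint_inclusion_necessary (n : ℕ)
    (a₁ a₂ : Fin n → ℚ) (b₁ b₂ : ℚ) (ha₁ : a₁ ≠ 0)
    (h : ∀ y : Fin n → ℚ, a₁ ⬝ᵥ y ≤ b₁ → a₂ ⬝ᵥ y ≤ b₂) :
    (∃ k : ℚ, 0 < k ∧ k • a₁ = a₂ ∧ k * b₁ ≤ b₂) ∨ (a₂ = 0 ∧ 0 ≤ b₂) := by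
  set A : ℚ := a₁ ⬝ᵥ a₁ with hAdef
  have hAnn : 0 ≤ A := Finset.sum_nonneg fun i _ => mul_self_nonneg _
  have hA : 0 < A := by
    rcases lt_or_eq_of_le hAnn with h' | h'
    · exact h'
    · exact absurd ((dotProduct_self_eq_zero).mp h'.symm) ha₁
  set k : ℚ := (a₂ ⬝ᵥ a₁) / A with hkdef
  set v : Fin n → ℚ := a₂ - k • a₁ with hvdef
  have ha1v : a₁ ⬝ᵥ v = 0 := by
    simp [hvdef, dotProduct_sub, dotProduct_smul, hkdef,
      dotProduct_comm a₂ a₁]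
    field_simp
    rw [← hAdef]; ring
  have ha2v : a₂ ⬝ᵥ v = v ⬝ᵥ v := by
    have : a₂ ⬝ᵥ v = (v + k • a₁) ⬝ᵥ v := by
      congr 1; simp [hvdef]
    rw [this, add_dotProduct, smul_dotProduct, ha1v]
    simp
  -- base feasible point
  set y₀ : Fin n → ℚ := (b₁ / A) • a₁ with hy0def
  have hy0 : a₁ ⬝ᵥ y₀ = b₁ := by
    simp [hy0def, dotProduct_smul]
    field_simp
    rw [← hAdef]
  have hy0feas : a₂ ⬝ᵥ y₀ ≤ b₂ := h y₀ (le_of_eq hy0)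
  have ha2y0 : a₂ ⬝ᵥ y₀ = k * b₁ := by
    simp [hy0def, dotProduct_smul, hkdef, dotProduct_comm a₂ a₁]
    ring
  -- show v = 0
  have hv0 : v = 0 := by
    by_contra hv
    have hVpos : 0 < v ⬝ᵥ v := by
      rcases lt_or_eq_of_le (Finset.sum_nonneg fun i _ => mul_self_nonneg (v i)) with h' | h'
      · exact h'
      · exact absurd ((dotProduct_self_eq_zero).mp h'.symm) hv
    set V : ℚ := v ⬝ᵥ v
    set t : ℚ := (b₂ - k * b₁) / V + 1 with htdef
    set y : Fin n → ℚ := y₀ + t • v with hydef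
    have h1 : a₁ ⬝ᵥ y ≤ b₁ := by
      simp [hydef, dotProduct_add, dotProduct_smul, ha1v, hy0]
    have h2 : a₂ ⬝ᵥ y = k * b₁ + t * V := by
      simp [hydef, dotProduct_add, dotProduct_smul, ha2v, ha2y0]
    have := h y h1
    rw [h2, htdef] at this
    have : (b₂ - k * b₁) / V * V ≤ b₂ - k * b₁ - V := by linarith
    rw [div_mul_cancel₀ _ (ne_of_gt hVpos)] at this
    linarith
  have ha2 : a₂ = k • a₁ := by
    have := hv0
    rw [hvdef, sub_eq_zero] at this
    exact this
  -- show k ≥ 0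
  have hknn : 0 ≤ k := by
    by_contra hk
    push_neg at hk
    set s : ℚ := min (b₁ / A) (b₂ / (k * A)) - 1 with hsdef
    set y : Fin n → ℚ := s • a₁ with hydef
    have h1 : a₁ ⬝ᵥ y ≤ b₁ := by
      have hs : s ≤ b₁ / A := by
        have := min_le_left (b₁ / A) (b₂ / (k * A)); linarith
      have : s * A ≤ b₁ / A * A := by nlinarith
      rw [div_mul_cancel₀ _ (ne_of_gt hA)] at this
      simpa [hydef, dotProduct_smul] using this
    have h2 : a₂ ⬝ᵥ y = k * (s * A) := by
      simp [hydef, ha2, smul_dotProduct, dotProduct_smul]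
      ring
    have hkA : k * A < 0 := mul_neg_of_neg_of_pos hk hA
    have hs2 : s < b₂ / (k * A) := by
      have := min_le_right (b₁ / A) (b₂ / (k * A)); linarith
    have : b₂ / (k * A) * (k * A) < s * (k * A) :=
      (mul_lt_mul_right_of_neg hkA).mpr hs2
    rw [div_mul_cancel₀ _ (ne_of_lt hkA)] at this
    have := h y h1
    rw [h2] at this
    nlinarith
  rcases lt_or_eq_of_le hknn with hkpos | hk0
  · left
    refine ⟨k, hkpos, ha2.symm, ?_⟩
    rw [← ha2y0]; exact hy0feas
  · right
    constructor
    · rw [ha2, ← hk0, zero_smul]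
    · have : a₂ ⬝ᵥ y₀ = 0 := by rw [ha2y0, ← hk0]; ring
      linarith [hy0feas, this]
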